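/- (Generalized Pringsheim theorem.) Let w : ℕ → ℝ be a weight sequence, let a : ℕ → ℝ satisfy a k ≥ 0 for all k, and let Q ∈ ℝ be such that the series ∑_k a k · exp(−(w k)·s) converges for every complex s with Re s > Q and diverges for every real s < Q. Then F has a singularity at s = Q: there is no radius r > 0 and no function g : ℂ → ℂ analytic on the open ball of radius r centered at Q such that g s = ∑_k a k · exp(−(w k)·s) for all s in that ball with Re s > Q. -/

import Mathlib

/-- A weight sequence: strictly increasing and nonnegative. -/
def IsWeightSeq (w : ℕ → ℝ) : Prop :=
  StrictMono w ∧ ∀ k, 0 ≤ w k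


namespace GPaux
open Complex Nat

lemma hasSum_exp_div_real (x : ℝ) : HasSum (fun n : ℕ => x ^ n / n !) (Real.exp x) := by
  have h := (Real.summable_pow_div_factorial x).hasSum
  rwa [show (∑' n : ℕ, x ^ n / n !) = Real.exp x by
    rw [Real.exp_eq_exp_ℝ, NormedSpace.exp_eq_tsum_div]] at h

lemma hasSum_exp_div_complex (z : ℂ) : HasSum (fun n : ℕ => z ^ n / n !) (Complex.exp z) := by
  have h := (NormedSpace.expSeries_div_summable z).hasSum
  rwa [show (∑' n : ℕ, z ^ n / n !) = Complex.exp z by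
    rw [Complex.exp_eq_exp_ℂ, NormedSpace.exp_eq_tsum_div]] at h

lemma pow_le_factorial_mul_exp {x : ℝ} (hx : 0 ≤ x) (n : ℕ) : x ^ n ≤ n ! * Real.exp x := by
  have h1 : x ^ n / n ! ≤ Real.exp x := by
    refine le_trans ?_ (Real.sum_le_exp_of_nonneg hx (n + 1))
    exact Finset.single_le_sum (f := fun i => x ^ i / i !)
      (fun i _ => by positivity) (Finset.self_mem_range_succ n)
  have hn : (0:ℝ) < n ! := by positivity
  rw [div_le_iff₀ hn] at h1
  linarith

lemma summable_real_aux (w a : ℕ → ℝ) (ha : ∀ k, 0 ≤ a k) {σ : ℝ}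
    (h : Summable (fun k => (a k : ℂ) * Complex.exp (-(w k : ℂ) * (σ : ℂ)))) :
    Summable (fun k => a k * Real.exp (-(w k) * σ)) := by
  have h2 := h.norm
  convert h2 using 2 with k
  rw [norm_mul, Complex.norm_real, Real.norm_eq_abs,
    Complex.norm_exp, _root_.abs_of_nonneg (ha k)]
  congr 1
  simp [Complex.mul_re]

lemma summable_aux2 (w a : ℕ → ℝ) (hw0 : ∀ k, 0 ≤ w k) (ha : ∀ k, 0 ≤ a k)
    {σ u : ℝ} (hu : 0 ≤ u)
    (h : Summable (fun k => a k * Real.exp (-(w k) * (σ - u)))) :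
    Summable (fun p : ℕ × ℕ => a p.1 * (w p.1 * u) ^ p.2 / (p.2)! * Real.exp (-(w p.1) * σ)) := by
  rw [summable_prod_of_nonneg (fun p => by have := hw0 p.1; have := ha p.1; positivity)]
  constructor
  · intro k
    have h1 : (fun n : ℕ => a k * (w k * u) ^ n / n ! * Real.exp (-(w k) * σ))
        = fun n : ℕ => (a k * Real.exp (-(w k) * σ)) * ((w k * u) ^ n / n !) := by
      funext n; ring
    rw [h1]
    exact ((hasSum_exp_div_real (w k * u)).mul_left _).summable
  · have h1 : ∀ k : ℕ, (∑' n : ℕ, a k * (w k * u) ^ n / n ! * Real.exp (-(w k) * σ))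
        = a k * Real.exp (-(w k) * (σ - u)) := by
      intro k
      have h2 : (fun n : ℕ => a k * (w k * u) ^ n / n ! * Real.exp (-(w k) * σ))
          = fun n : ℕ => (a k * Real.exp (-(w k) * σ)) * ((w k * u) ^ n / n !) := by
        funext n; ring
      rw [h2, ((hasSum_exp_div_real (w k * u)).mul_left _).tsum_eq, mul_assoc, ← Real.exp_add]
      ring_nf
    simpa only [h1] using h

noncomputable def Fser (w a : ℕ → ℝ) (s : ℂ) : ℂ := ∑' k, (a k : ℂ) * Complex.exp (-(w k : ℂ) * s)

noncomputable def coeffs (w a : ℕ → ℝ) (s₁ : ℂ) (n : ℕ) : ℂ :=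
  (∑' k, (a k : ℂ) * (-(w k : ℂ)) ^ n * Complex.exp (-(w k : ℂ) * s₁)) / n !

lemma norm_term (w a : ℕ → ℝ) (hw0 : ∀ k, 0 ≤ w k) (ha : ∀ k, 0 ≤ a k) (n k : ℕ) (s₁ : ℂ) :
    ‖(a k : ℂ) * (-(w k : ℂ)) ^ n * Complex.exp (-(w k : ℂ) * s₁)‖
      = a k * w k ^ n * Real.exp (-(w k) * s₁.re) := by
  rw [norm_mul, norm_mul, norm_pow, Complex.norm_real, Real.norm_eq_abs,
    Complex.norm_exp, _root_.abs_of_nonneg (ha k)]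
  have h1 : ‖-(w k : ℂ)‖ = w k := by
    rw [norm_neg, Complex.norm_real, Real.norm_eq_abs, _root_.abs_of_nonneg (hw0 k)]
  have h2 : (-(w k : ℂ) * s₁).re = -(w k) * s₁.re := by
    simp [Complex.mul_re]
  rw [h1, h2]

lemma summable_pow_aux (w a : ℕ → ℝ) (hw0 : ∀ k, 0 ≤ w k) (ha : ∀ k, 0 ≤ a k)
    {σ ε : ℝ} (hε : 0 < ε)
    (h : Summable (fun k => a k * Real.exp (-(w k) * (σ - ε)))) (n : ℕ) :
    Summable (fun k => a k * (w k) ^ n * Real.exp (-(w k) * σ)) := by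
  refine Summable.of_nonneg_of_le (fun k => by have := hw0 k; have := ha k; positivity)
    (fun k => ?_) (h.mul_left ((n ! : ℝ) * ε⁻¹ ^ n))
  have key : w k ^ n ≤ (n ! : ℝ) * ε⁻¹ ^ n * Real.exp (ε * w k) := by
    have h2 := pow_le_factorial_mul_exp (mul_nonneg hε.le (hw0 k)) n
    have h3 : w k ^ n = (ε * w k) ^ n * ε⁻¹ ^ n := by
      rw [mul_pow]
      rw [mul_right_comm, ← mul_pow, mul_inv_cancel₀ hε.ne', one_pow, one_mul]
    rw [h3]
    calc (ε * w k) ^ n * ε⁻¹ ^ n ≤ (n ! * Real.exp (ε * w k)) * ε⁻¹ ^ n := by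
          apply mul_le_mul_of_nonneg_right h2 (by positivity)
      _ = (n ! : ℝ) * ε⁻¹ ^ n * Real.exp (ε * w k) := by ring
  have hE : Real.exp (-(w k) * (σ - ε)) = Real.exp (-(w k) * σ) * Real.exp (ε * w k) := by
    rw [← Real.exp_add]; ring_nf
  rw [hE]
  calc a k * w k ^ n * Real.exp (-(w k) * σ)
      ≤ a k * ((n ! : ℝ) * ε⁻¹ ^ n * Real.exp (ε * w k)) * Real.exp (-(w k) * σ) := by
        have := ha k
        have hexp : (0:ℝ) ≤ Real.exp (-(w k) * σ) := (Real.exp_pos _).le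
        nlinarith [mul_le_mul_of_nonneg_left key (ha k)]
    _ = (n ! : ℝ) * ε⁻¹ ^ n * (a k * (Real.exp (-(w k) * σ) * Real.exp (ε * w k))) := by ring

lemma hasFPowerSeriesOnBall_F (w a : ℕ → ℝ) (hw0 : ∀ k, 0 ≤ w k) (ha : ∀ k, 0 ≤ a k) (Q : ℝ)
    (hconv : ∀ s : ℂ, Q < s.re → Summable (fun k => (a k : ℂ) * Complex.exp (-(w k : ℂ) * s)))
    (s₁ : ℂ) (hs₁ : Q < s₁.re) (δ : NNReal) (hδ0 : 0 < δ) (hδ : (δ : ℝ) < s₁.re - Q) :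
    HasFPowerSeriesOnBall (Fser w a)
      (FormalMultilinearSeries.ofScalars ℂ (coeffs w a s₁)) s₁ δ := by
  -- double summability for any 0 ≤ u < s₁.re - Q
  have hsum2 : ∀ u : ℝ, 0 ≤ u → u < s₁.re - Q →
      Summable (fun p : ℕ × ℕ => a p.1 * (w p.1 * u) ^ p.2 / (p.2)! * Real.exp (-(w p.1) * s₁.re)) := by
    intro u hu hu'
    refine summable_aux2 w a hw0 ha hu ?_
    refine summable_real_aux w a ha (σ := s₁.re - u) ?_
    refine hconv _ ?_
    rw [Complex.ofReal_re]; linarith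
  -- fiberwise (over k) summability
  have hfiber : ∀ u : ℝ, 0 ≤ u → u < s₁.re - Q → ∀ n : ℕ,
      Summable (fun k => a k * (w k * u) ^ n / n ! * Real.exp (-(w k) * s₁.re)) :=
    fun u hu hu' n =>
      ((hsum2 u hu hu').comp_injective (i := fun k => (k, n))
        (fun k₁ k₂ h => (Prod.ext_iff.mp h).1)).congr (fun k => rfl)
  -- summability over k of a k * w k ^ n * exp(-w k s₁.re)  (norms of coefficient terms)
  have hfiber' : ∀ n : ℕ, Summable (fun k => a k * w k ^ n * Real.exp (-(w k) * s₁.re)) := by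
    intro n
    have hd : (0:ℝ) < (δ : ℝ) := hδ0
    have h1 := (hfiber δ hd.le hδ n).mul_left ((n ! : ℝ) * ((δ:ℝ))⁻¹ ^ n)
    refine h1.congr (fun k => ?_)
    have hn : (0:ℝ) < (n ! : ℝ) := by positivity
    field_simp
    have e : (1 / (δ:ℝ)) ^ n * (δ:ℝ) ^ n = 1 := by
      rw [← mul_pow, one_div_mul_cancel hd.ne', one_pow]
    linear_combination (a k * w k ^ n) * e
  have hd : (0:ℝ) < (δ : ℝ) := hδ0
  refine ⟨?_, by exact_mod_cast hδ0, ?_⟩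
  · -- radius bound
    apply FormalMultilinearSeries.le_radius_of_summable
    have hswap := (hsum2 δ hd.le hδ).prod_symm
    have hEn : Summable (fun n : ℕ =>
        ∑' k, a k * (w k * (δ:ℝ)) ^ n / n ! * Real.exp (-(w k) * s₁.re)) :=
      HasSum.summable (hswap.hasSum.prod_fiberwise (fun n => (hfiber δ hd.le hδ n).hasSum))
    refine Summable.of_nonneg_of_le (fun n => by positivity) (fun n => ?_) hEn
    rw [FormalMultilinearSeries.ofScalars_norm]
    have hnS : Summable (fun k => ‖(a k : ℂ) * (-(w k : ℂ)) ^ n * Complex.exp (-(w k : ℂ) * s₁)‖) :=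
      (hfiber' n).congr (fun k => (norm_term w a hw0 ha n k s₁).symm)
    have hnorm : ‖coeffs w a s₁ n‖ ≤ (∑' k, a k * w k ^ n * Real.exp (-(w k) * s₁.re)) / n ! := by
      rw [coeffs, norm_div]
      have hnc : ‖((n ! : ℕ) : ℂ)‖ = ((n ! : ℕ) : ℝ) := by
        simp
      rw [hnc]
      gcongr
      · exact le_trans (norm_tsum_le_tsum_norm hnS)
          (le_of_eq (tsum_congr (fun k => norm_term w a hw0 ha n k s₁)))
    have hEq : (∑' k, a k * (w k * (δ:ℝ)) ^ n / n ! * Real.exp (-(w k) * s₁.re))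
        = (∑' k, a k * w k ^ n * Real.exp (-(w k) * s₁.re)) * ((δ:ℝ) ^ n / n !) := by
      rw [← tsum_mul_right]
      exact tsum_congr (fun k => by rw [mul_pow]; ring)
    rw [hEq]
    calc ‖coeffs w a s₁ n‖ * (δ:ℝ) ^ n
        ≤ ((∑' k, a k * w k ^ n * Real.exp (-(w k) * s₁.re)) / n !) * (δ:ℝ) ^ n := by
          apply mul_le_mul_of_nonneg_right hnorm (by positivity)
      _ = (∑' k, a k * w k ^ n * Real.exp (-(w k) * s₁.re)) * ((δ:ℝ) ^ n / n !) := by ring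
  · -- HasSum on the ball
    intro y hy
    rw [mem_emetric_ball_zero_iff] at hy
    have hy' : ‖y‖ < (δ:ℝ) := by exact_mod_cast hy
    have hyRe : Q < (s₁ + y).re := by
      have h2 := abs_le.mp (Complex.abs_re_le_norm y)
      rw [Complex.add_re]
      linarith [h2.1]
    set H : ℕ × ℕ → ℂ := fun p =>
      (a p.1 : ℂ) * (-(w p.1 : ℂ)) ^ p.2 * Complex.exp (-(w p.1 : ℂ) * s₁) * y ^ p.2 / (p.2)!
      with hH
    have hu0 : 0 ≤ ‖y‖ := norm_nonneg y
    have hu1 : ‖y‖ < s₁.re - Q := lt_trans hy' hδ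
    have hnormH : ∀ p : ℕ × ℕ,
        ‖H p‖ = a p.1 * (w p.1 * ‖y‖) ^ p.2 / (p.2)! * Real.exp (-(w p.1) * s₁.re) := by
      intro p
      rw [hH]
      simp only
      rw [norm_div, norm_mul, norm_pow, norm_term w a hw0 ha]
      have hnc : ‖(((p.2)! : ℕ) : ℂ)‖ = (((p.2)! : ℕ) : ℝ) := by simp
      rw [hnc, mul_pow]
      ring
    have hHsummable : Summable H :=
      Summable.of_norm (((hsum2 ‖y‖ hu0 hu1)).congr (fun p => (hnormH p).symm))
    have hfibk : ∀ k : ℕ,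
        HasSum (fun n => H (k, n)) ((a k : ℂ) * Complex.exp (-(w k : ℂ) * (s₁ + y))) := by
      intro k
      have e1 := (hasSum_exp_div_complex (-(w k : ℂ) * y)).mul_left
        ((a k : ℂ) * Complex.exp (-(w k : ℂ) * s₁))
      have e2 : (fun n : ℕ => (a k : ℂ) * Complex.exp (-(w k:ℂ) * s₁) * ((-(w k:ℂ) * y) ^ n / n !))
          = fun n => H (k, n) := by
        funext n; rw [hH]; simp only; rw [mul_pow]; ring
      rw [e2] at e1
      rw [show -(w k:ℂ) * (s₁ + y) = -(w k:ℂ) * s₁ + -(w k:ℂ) * y by ring, Complex.exp_add,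
        ← mul_assoc]
      exact e1
    have hFval : Fser w a (s₁ + y) = ∑' p, H p :=
      (hHsummable.hasSum.prod_fiberwise hfibk).tsum_eq
    have hswapH : HasSum (fun p : ℕ × ℕ => H p.swap) (∑' p, H p) := by
      have h1 := hHsummable.prod_symm.hasSum
      rwa [show (∑' p : ℕ × ℕ, H p.swap) = ∑' p, H p from (Equiv.prodComm ℕ ℕ).tsum_eq H] at h1
    have hfibn : ∀ n : ℕ, HasSum (fun k => H (k, n)) (coeffs w a s₁ n * y ^ n) := by
      intro n
      have hs : Summable (fun k => H (k, n)) :=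
        (hHsummable.comp_injective (i := fun k => (k, n))
          (fun k₁ k₂ h => (Prod.ext_iff.mp h).1)).congr (fun k => rfl)
      have h1 := hs.hasSum
      have h2 : (fun k => H (k, n))
          = fun k => ((a k:ℂ) * (-(w k:ℂ)) ^ n * Complex.exp (-(w k:ℂ) * s₁)) * (y ^ n / n !) := by
        funext k; rw [hH]; ring
      rwa [show (∑' k, H (k, n)) = coeffs w a s₁ n * y ^ n from by
        rw [h2, tsum_mul_right, coeffs]; ring] at h1
    have final : HasSum (fun n => coeffs w a s₁ n * y ^ n) (Fser w a (s₁ + y)) := by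
      have h1 := hswapH.prod_fiberwise hfibn
      rwa [← hFval] at h1
    simpa only [FormalMultilinearSeries.ofScalars_apply_eq, smul_eq_mul] using final

end GPaux

/-- Generalized Pringsheim theorem: the abscissa of convergence of a generalized
Dirichlet series with nonnegative coefficients is a singularity of its sum. -/
theorem generalized_pringsheim (w a : ℕ → ℝ)
    (hw : IsWeightSeq w) (ha : ∀ k, 0 ≤ a k)
    (Q : ℝ)
    (hconv : ∀ s : ℂ, Q < s.re →
      Summable (fun k => (a k : ℂ) * Complex.exp (-(w k : ℂ) * s)))
    (hdiv : ∀ s : ℝ, s < Q →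
      ¬ Summable (fun k => a k * Real.exp (-(w k) * s))) :
    ¬ ∃ (r : ℝ) (g : ℂ → ℂ), 0 < r ∧
        (∀ z ∈ Metric.ball (Q : ℂ) r, AnalyticAt ℂ g z) ∧
        (∀ s ∈ Metric.ball (Q : ℂ) r, Q < s.re →
          g s = ∑' k, (a k : ℂ) * Complex.exp (-(w k : ℂ) * s)) := by
  classical
  rintro ⟨r, g, hr, hg, hgF⟩
  obtain ⟨hwmono, hw0⟩ := hw
  open GPaux Nat in
  set F := GPaux.Fser w a with hF
  set s₀ : ℂ := ((Q + r / 2 : ℝ) : ℂ) with hs₀def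
  have hs₀re : s₀.re = Q + r / 2 := Complex.ofReal_re _
  have hs₀Q : Q < s₀.re := by rw [hs₀re]; linarith
  -- F is differentiable on the half-plane
  have hFdiff : ∀ z : ℂ, Q < z.re → DifferentiableAt ℂ F z := by
    intro z hz
    set δ : NNReal := Real.toNNReal ((z.re - Q) / 2) with hδdef
    have hδ0 : 0 < δ := Real.toNNReal_pos.mpr (by linarith)
    have hδc : (δ : ℝ) = (z.re - Q) / 2 := Real.coe_toNNReal _ (by linarith)
    have := GPaux.hasFPowerSeriesOnBall_F w a hw0 ha Q hconv z hz δ hδ0 (by rw [hδc]; linarith)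
    exact this.analyticAt.differentiableAt
  have hOpen : IsOpen {z : ℂ | Q < z.re} := isOpen_lt continuous_const Complex.continuous_re
  set h : ℂ → ℂ := fun z => if Q < z.re then F z else g z with hhdef
  have hhF : ∀ z : ℂ, Q < z.re → h z = F z := fun z hz => if_pos hz
  have hhg : ∀ z ∈ Metric.ball (Q : ℂ) r, h z = g z := by
    intro z hz
    by_cases hc : Q < z.re
    · rw [hhF z hc, hF]
      exact (hgF z hz hc).symm
    · exact if_neg hc
  have hdiffV : ∀ z : ℂ, z ∈ Metric.ball (Q : ℂ) r ∪ {z : ℂ | Q < z.re} →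
      DifferentiableAt ℂ h z := by
    rintro z (hz | hz)
    · have heq : h =ᶠ[nhds z] g :=
        Filter.eventuallyEq_of_mem (Metric.isOpen_ball.mem_nhds hz) hhg
      exact heq.differentiableAt_iff.mpr (hg z hz).differentiableAt
    · have heq : h =ᶠ[nhds z] F :=
        Filter.eventuallyEq_of_mem (hOpen.mem_nhds hz) hhF
      exact heq.differentiableAt_iff.mpr (hFdiff z hz)
  -- the big closed ball is inside the union
  set ρ : NNReal := Real.toNNReal (21 * r / 20) with hρdef
  have hρc : (ρ : ℝ) = 21 * r / 20 := Real.coe_toNNReal _ (by linarith)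
  have hρ0 : 0 < ρ := Real.toNNReal_pos.mpr (by linarith)
  have hsubset : Metric.closedBall s₀ (ρ : ℝ) ⊆ Metric.ball (Q : ℂ) r ∪ {z : ℂ | Q < z.re} := by
    intro z hz
    by_cases hc : Q < z.re
    · exact Or.inr hc
    · push_neg at hc
      left
      rw [Metric.mem_closedBall] at hz
      rw [Metric.mem_ball]
      by_contra hcon
      push_neg at hcon
      rw [Complex.dist_eq_re_im] at hz hcon
      have hQre : (Q : ℂ).re = Q := Complex.ofReal_re _
      have hQim : (Q : ℂ).im = 0 := Complex.ofReal_im _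
      have hs₀im : s₀.im = 0 := Complex.ofReal_im _
      rw [hQre, hQim] at hcon
      rw [hs₀re, hs₀im] at hz
      have h1 : (z.re - (Q + r / 2)) ^ 2 + (z.im - 0) ^ 2 ≤ (21 * r / 20) ^ 2 := by
        have := Real.sqrt_le_sqrt (le_of_eq (rfl : (z.re - (Q + r/2)) ^ 2 + (z.im - 0) ^ 2 = _))
        nlinarith [Real.sq_sqrt (by positivity : (0:ℝ) ≤ (z.re - (Q + r/2)) ^ 2 + (z.im - 0) ^ 2),
          Real.sqrt_nonneg ((z.re - (Q + r/2)) ^ 2 + (z.im - 0) ^ 2), hρc ▸ hz]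
      have h2 : r ^ 2 ≤ (z.re - Q) ^ 2 + (z.im - 0) ^ 2 := by
        nlinarith [Real.sq_sqrt (by positivity : (0:ℝ) ≤ (z.re - Q) ^ 2 + (z.im - 0) ^ 2),
          Real.sqrt_nonneg ((z.re - Q) ^ 2 + (z.im - 0) ^ 2)]
      nlinarith [sq_nonneg (z.re - Q), sq_nonneg z.im]
  have hdiffc : DifferentiableOn ℂ h (Metric.closedBall s₀ (ρ : ℝ)) :=
    fun z hz => (hdiffV z (hsubset hz)).differentiableWithinAt
  have hp : HasFPowerSeriesOnBall h (cauchyPowerSeries h s₀ (ρ : ℝ)) s₀ (ρ : ENNReal) :=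
    hdiffc.hasFPowerSeriesOnBall hρ0
  -- the explicit power series of F at s₀
  set δ₀ : NNReal := Real.toNNReal (r / 4) with hδ₀def
  have hδ₀c : (δ₀ : ℝ) = r / 4 := Real.coe_toNNReal _ (by linarith)
  have hδ₀0 : 0 < δ₀ := Real.toNNReal_pos.mpr (by linarith)
  have hq : HasFPowerSeriesOnBall F (FormalMultilinearSeries.ofScalars ℂ (GPaux.coeffs w a s₀)) s₀ δ₀ :=
    GPaux.hasFPowerSeriesOnBall_F w a hw0 ha Q hconv s₀ hs₀Q δ₀ hδ₀0
      (by rw [hδ₀c, hs₀re]; linarith)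
  have hFh : F =ᶠ[nhds s₀] h :=
    Filter.eventuallyEq_of_mem (hOpen.mem_nhds hs₀Q) (fun z hz => (hhF z hz).symm)
  have hqh : HasFPowerSeriesAt h (FormalMultilinearSeries.ofScalars ℂ (GPaux.coeffs w a s₀)) s₀ :=
    hq.hasFPowerSeriesAt.congr hFh
  have hpq : cauchyPowerSeries h s₀ (ρ : ℝ)
      = FormalMultilinearSeries.ofScalars ℂ (GPaux.coeffs w a s₀) :=
    hp.hasFPowerSeriesAt.eq_formalMultilinearSeries hqh
  rw [hpq] at hp
  -- evaluate the series at y = -r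
  set y : ℂ := ((-r : ℝ) : ℂ) with hydef
  have hymem : y ∈ Metric.eball (0 : ℂ) (ρ : ENNReal) := by
    rw [mem_emetric_ball_zero_iff]
    have hn : ‖y‖ = r := by
      rw [hydef, Complex.norm_real, Real.norm_eq_abs, abs_neg, abs_of_pos hr]
    rw [enorm_eq_nnnorm, show ‖y‖₊ = Real.toNNReal r from NNReal.coe_injective (by rw [coe_nnnorm, hn, Real.coe_toNNReal _ hr.le])]
    exact_mod_cast (by rw [Real.coe_toNNReal _ hr.le, hρc]; linarith : (Real.toNNReal r : ℝ) < (ρ : ℝ))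
  have hsumc := hp.hasSum hymem
  simp only [FormalMultilinearSeries.ofScalars_apply_eq, smul_eq_mul] at hsumc
  -- identify each term as a nonnegative real
  set e : ℕ → ℝ := fun n => ∑' k, a k * (w k * r) ^ n / n ! * Real.exp (-(w k) * (Q + r / 2))
    with hedef
  have hterm : ∀ n : ℕ, GPaux.coeffs w a s₀ n * y ^ n = ((e n : ℝ) : ℂ) := by
    intro n
    rw [GPaux.coeffs, div_mul_eq_mul_div, ← tsum_mul_right, ← tsum_div_const, hedef,
      Complex.ofReal_tsum]
    refine tsum_congr (fun k => ?_)
    rw [hs₀def, hydef]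
    have hexp : Complex.exp (-(w k : ℂ) * ((Q + r / 2 : ℝ) : ℂ))
        = ((Real.exp (-(w k) * (Q + r / 2)) : ℝ) : ℂ) := by
      rw [show (-(w k : ℂ) * ((Q + r / 2 : ℝ) : ℂ)) = ((-(w k) * (Q + r / 2) : ℝ) : ℂ) by
        push_cast; ring, Complex.ofReal_exp]
    rw [hexp]
    push_cast
    ring_nf
    rw [pow_mul']
    norm_num
  have hsummable_e : Summable e := by
    have h1 : Summable (fun n => ((e n : ℝ) : ℂ)) := by
      refine (hsumc.summable).congr (fun n => ?_)
      exact (hterm n)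
    exact Complex.summable_ofReal.mp h1
  -- Tonelli: swap and sum over k
  have hGnonneg : ∀ p : ℕ × ℕ,
      0 ≤ a p.2 * (w p.2 * r) ^ p.1 / (p.1)! * Real.exp (-(w p.2) * (Q + r / 2)) :=
    fun p => by have := ha p.2; have := hw0 p.2; positivity
  have hGprod : Summable (fun p : ℕ × ℕ =>
      a p.2 * (w p.2 * r) ^ p.1 / (p.1)! * Real.exp (-(w p.2) * (Q + r / 2))) := by
    rw [summable_prod_of_nonneg hGnonneg]
    constructor
    · intro n
      have hbase : Summable (fun k => a k * Real.exp (-(w k) * ((Q + r / 2) - r / 4))) := by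
        refine GPaux.summable_real_aux w a ha (hconv _ ?_)
        rw [Complex.ofReal_re]; linarith
      have h2 := GPaux.summable_pow_aux w a hw0 ha (by linarith : (0:ℝ) < r / 4) hbase n
      refine (h2.mul_left (r ^ n / n !)).congr (fun k => ?_)
      rw [mul_pow]; field_simp
    · exact hsummable_e.congr (fun n => rfl)
  have hGswap := hGprod.prod_symm
  have hfibk : ∀ k : ℕ, HasSum
      (fun n : ℕ => a k * (w k * r) ^ n / n ! * Real.exp (-(w k) * (Q + r / 2)))
      (a k * Real.exp (-(w k) * (Q - r / 2))) := by
    intro k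
    have e1 := (GPaux.hasSum_exp_div_real (w k * r)).mul_left
      (a k * Real.exp (-(w k) * (Q + r / 2)))
    have e2 : (fun n : ℕ => a k * Real.exp (-(w k) * (Q + r / 2)) * ((w k * r) ^ n / n !))
        = fun n : ℕ => a k * (w k * r) ^ n / n ! * Real.exp (-(w k) * (Q + r / 2)) := by
      funext n; ring
    rw [e2] at e1
    have hv : a k * Real.exp (-(w k) * (Q - r / 2))
        = a k * Real.exp (-(w k) * (Q + r / 2)) * Real.exp (w k * r) := by
      rw [mul_assoc, ← Real.exp_add]
      ring_nf
    rw [hv]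
    exact e1
  have hfinal : Summable (fun k => a k * Real.exp (-(w k) * (Q - r / 2))) :=
    (hGswap.hasSum.prod_fiberwise hfibk).summable
  exact hdiv (Q - r / 2) (by linarith) hfinal
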